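/- Let n > 1 and let F : F_{2^n} → F_{2^n} be APN. Then for every x_0 ∈ F_{2^n} there exists ε ∈ F_{2^n} with ε ≠ 0 such that the (x_0,ε)-modification F' of F is not APN. -/

import Mathlib

open scoped Classical

noncomputable instance (n : ℕ) : Fintype (GaloisField 2 n) := Fintype.ofFinite _

/-- The absolute trace of `F_{2^n}` over `F_2`. -/
noncomputable def fieldTr (n : ℕ) (x : GaloisField 2 n) : ZMod 2 :=
  Algebra.trace (ZMod 2) (GaloisField 2 n) x

/-- `(-1)^{Tr(x)}` as an integer. -/
noncomputable def chi (n : ℕ) (x : GaloisField 2 n) : ℤ :=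
  (-1) ^ (fieldTr n x).val

/-- The Walsh transform `W_F(a,b)`. -/
noncomputable def walsh (n : ℕ) (F : GaloisField 2 n → GaloisField 2 n)
    (a b : GaloisField 2 n) : ℤ :=
  ∑ x : GaloisField 2 n, chi n (b * F x + a * x)

/-- `F` is almost perfect nonlinear. -/
def IsAPN (n : ℕ) (F : GaloisField 2 n → GaloisField 2 n) : Prop :=
  ∀ a b : GaloisField 2 n, a ≠ 0 →
    Nat.card {x : GaloisField 2 n // F (x + a) + F x = b} ≤ 2

/-- `F` is partially APN at the point `x₀`. -/
def IsPAPN (n : ℕ) (F : GaloisField 2 n → GaloisField 2 n) (x₀ : GaloisField 2 n) : Prop :=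
  ∀ u v : GaloisField 2 n, F x₀ + F u + F v + F (x₀ + u + v) = 0 →
    (x₀ + u) * (x₀ + v) * (u + v) = 0

/-- The `(x₀, ε)`-modification of `F`. -/
noncomputable
def pointModify (n : ℕ) (F : GaloisField 2 n → GaloisField 2 n) (x₀ ε : GaloisField 2 n) :
    GaloisField 2 n → GaloisField 2 n :=
  fun x => if x = x₀ then F x₀ + ε else F x

/-- `E_F(a,b) = (-1)^{Tr(a x₀ + b y₀)} (1 - (-1)^{Tr(b ε)})`. -/
noncomputable def EF (n : ℕ) (F : GaloisField 2 n → GaloisField 2 n)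
    (x₀ ε a b : GaloisField 2 n) : ℤ :=
  chi n (a * x₀ + b * F x₀) * (1 - chi n (b * ε))


lemma three_sols {n : ℕ} (G : GaloisField 2 n → GaloisField 2 n)
    (a b u v w : GaloisField 2 n) (huv : u ≠ v) (huw : u ≠ w) (hvw : v ≠ w)
    (hu : G (u + a) + G u = b) (hv : G (v + a) + G v = b) (hw : G (w + a) + G w = b) :
    2 < Nat.card {x : GaloisField 2 n // G (x + a) + G x = b} := by
  rw [Nat.card_eq_fintype_card]
  have hinj : Function.Injective
      (![⟨u, hu⟩, ⟨v, hv⟩, ⟨w, hw⟩] : Fin 3 → {x : GaloisField 2 n // G (x + a) + G x = b}) := by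
    intro i j hij
    fin_cases i <;> fin_cases j <;> simp_all [Subtype.ext_iff]
  have := Fintype.card_le_of_injective _ hinj
  simp at this
  omega

theorem apn_modification_not_apn (n : ℕ) (hn : 1 < n)
    (F : GaloisField 2 n → GaloisField 2 n) (hF : IsAPN n F) (x₀ : GaloisField 2 n) :
    ∃ ε : GaloisField 2 n, ε ≠ 0 ∧ ¬ IsAPN n (pointModify n F x₀ ε) := by
  have two : ∀ z : GaloisField 2 n, z + z = 0 := fun z => CharTwo.add_self_eq_zero z
  set a : GaloisField 2 n := 1 with ha_def
  have ha : a ≠ 0 := one_ne_zero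
  have hxa : x₀ + a ≠ x₀ := by
    intro h
    exact ha (by simpa using (left_eq_add.mp h.symm))
  have hcard : 4 ≤ Fintype.card (GaloisField 2 n) := by
    have h : Fintype.card (GaloisField 2 n) = 2 ^ n := by
      rw [← Nat.card_eq_fintype_card]
      exact GaloisField.card 2 n (by omega)
    have : (2 : ℕ) ^ 2 ≤ 2 ^ n := Nat.pow_le_pow_right (by norm_num) hn
    omega
  -- find y distinct from x₀ and x₀ + a
  obtain ⟨y, hy1, hy2⟩ : ∃ y : GaloisField 2 n, y ≠ x₀ ∧ y ≠ x₀ + a := by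
    by_contra h
    push_neg at h
    have hsub : (Finset.univ : Finset (GaloisField 2 n)) ⊆ {x₀, x₀ + a} := by
      intro z _
      rcases Classical.em (z = x₀) with h1 | h1
      · simp [h1]
      · simp [h z h1]
    have := Finset.card_le_card hsub
    have h2 : ({x₀, x₀ + a} : Finset (GaloisField 2 n)).card ≤ 2 :=
      Finset.card_insert_le _ _ |>.trans (by simp)
    simp [Finset.card_univ] at this
    omega
  have hya : y + a ≠ x₀ := by
    intro h
    apply hy2
    have : y + a + a = x₀ + a := by rw [h]
    rwa [add_assoc, two a, add_zero] at this
  set ε : GaloisField 2 n := F (y + a) + F y + F (x₀ + a) + F x₀ with hε_def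
  have hε : ε ≠ 0 := by
    intro h
    have hb : F (y + a) + F y = F (x₀ + a) + F x₀ := by
      have := h
      rw [hε_def] at this
      linear_combination this - two (F (x₀ + a)) - two (F x₀)
    have h3 := three_sols F a (F (x₀ + a) + F x₀) x₀ (x₀ + a) y
      (fun h' => hxa h'.symm) (fun h' => hy1 h'.symm) (fun h' => hy2 h'.symm)
      rfl (by rw [add_assoc, two a, add_zero]; ring) hb
    exact absurd (hF a (F (x₀ + a) + F x₀) ha) (not_le.mpr h3)
  refine ⟨ε, hε, fun hAPN => ?_⟩
  set G := pointModify n F x₀ ε with hG_def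
  have hGx₀ : G x₀ = F x₀ + ε := by simp [hG_def, pointModify]
  have hGother : ∀ z : GaloisField 2 n, z ≠ x₀ → G z = F z := by
    intro z hz
    simp [hG_def, pointModify, hz]
  have hxaa : x₀ + a + a = x₀ := by rw [add_assoc, two a, add_zero]
  have hu : G (x₀ + a) + G x₀ = F (y + a) + F y := by
    rw [hGother _ hxa, hGx₀, hε_def]
    linear_combination two (F (x₀ + a)) + two (F x₀)
  have hv : G (x₀ + a + a) + G (x₀ + a) = F (y + a) + F y := by
    rw [hxaa, hGx₀, hGother _ hxa, hε_def]
    linear_combination two (F (x₀ + a)) + two (F x₀)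
  have hw : G (y + a) + G y = F (y + a) + F y := by
    rw [hGother _ hya, hGother _ hy1]
  have h3 := three_sols G a (F (y + a) + F y) x₀ (x₀ + a) y
    (fun h' => hxa h'.symm) (fun h' => hy1 h'.symm) (fun h' => hy2 h'.symm) hu hv hw
  exact absurd (hAPN a (F (y + a) + F y) ha) (not_le.mpr h3)
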